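/- arXiv:2307.05170 — 3 statements merged into one kernel-verified Lean document; each statement's English description precedes it below -/
import Mathlib

section
/- Let d ≥ 1, let α ∈ (0,∞)^d be a location parameter, let τ > 0 be a temperature, and let G_1,…,G_d be i.i.d. real random variables with the standard Gumbel distribution. Define the concrete random variable X with coordinates X_k = exp((log α_k + G_k)/τ) / Σ_{i=1}^d exp((log α_i + G_i)/τ). Then for every k ∈ {1,…,d}, the probability that X_k > X_i for all i ≠ k equals α_k / Σ_{i=1}^d α_i. (Proposition 1, part 1: rounding property.) -/
open MeasureTheory ProbabilityTheory Real Filter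


open MeasureTheory ProbabilityTheory Real Filter Set

namespace ConcreteAux

noncomputable def gd (a x : ℝ) : ℝ := a * Real.exp (-x) * Real.exp (-(a * Real.exp (-x)))
noncomputable def gH (a x : ℝ) : ℝ := Real.exp (-(a * Real.exp (-x)))

lemma gd_nonneg {a : ℝ} (ha : 0 ≤ a) (x : ℝ) : 0 ≤ gd a x := by
  unfold gd; positivity

lemma gH_nonneg (a x : ℝ) : 0 ≤ gH a x := (Real.exp_pos _).le

lemma continuous_gH (a : ℝ) : Continuous (gH a) := by
  unfold gH; continuity

lemma continuous_gd (a : ℝ) : Continuous (gd a) := by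
  unfold gd; continuity

lemma hasDerivAt_gH (a x : ℝ) : HasDerivAt (gH a) (gd a x) x := by
  have h2 : HasDerivAt (fun x : ℝ => Real.exp (-x)) (-Real.exp (-x)) x := by
    simpa [Function.comp_def] using (Real.hasDerivAt_exp (-x)).comp x (hasDerivAt_neg x)
  have h1 : HasDerivAt (fun x : ℝ => -(a * Real.exp (-x))) (a * Real.exp (-x)) x := by
    simpa [mul_neg, neg_neg, Pi.neg_def] using (h2.const_mul a).neg
  have := (Real.hasDerivAt_exp (-(a * Real.exp (-x)))).comp x h1
  rw [show gd a x = Real.exp (-(a * Real.exp (-x))) * (a * Real.exp (-x)) by unfold gd; ring]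
  exact this

lemma tendsto_gH_atBot {a : ℝ} (ha : 0 < a) : Tendsto (gH a) atBot (nhds 0) := by
  have h1 : Tendsto (fun x : ℝ => a * Real.exp (-x)) atBot atTop :=
    (Real.tendsto_exp_atTop.comp tendsto_neg_atBot_atTop).const_mul_atTop ha
  exact Real.tendsto_exp_atBot.comp (tendsto_neg_atTop_atBot.comp h1)

lemma tendsto_gH_atTop (a : ℝ) : Tendsto (gH a) atTop (nhds 1) := by
  have h1 : Tendsto (fun x : ℝ => -(a * Real.exp (-x))) atTop (nhds 0) := by
    have : Tendsto (fun x : ℝ => Real.exp (-x)) atTop (nhds 0) :=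
      Real.tendsto_exp_atBot.comp tendsto_neg_atTop_atBot
    simpa using (this.const_mul a).neg
  have := (Real.continuous_exp.tendsto 0).comp h1
  rw [Real.exp_zero] at this
  exact this

lemma intervalIntegral_gd (a : ℝ) (x y : ℝ) : ∫ t in x..y, gd a t = gH a y - gH a x :=
  intervalIntegral.integral_eq_sub_of_hasDerivAt (fun t _ => hasDerivAt_gH a t)
    ((continuous_gd a).intervalIntegrable x y)

lemma integrableOn_gd_Iic {a : ℝ} (ha : 0 ≤ a) (b : ℝ) :
    IntegrableOn (gd a) (Iic b) := by
  refine integrableOn_Iic_of_intervalIntegral_norm_bounded (gH a b) b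
    (a := fun i : ℕ => b - i) (l := atTop)
    (fun i => (continuous_gd a).integrableOn_Ioc) ?_ ?_
  · simpa [sub_eq_add_neg] using tendsto_atBot_add_const_left atTop b
      (tendsto_neg_atTop_atBot.comp tendsto_natCast_atTop_atTop)
  · filter_upwards with i
    have hle : b - (i : ℝ) ≤ b := by simp
    have : ∫ x in (b - (i : ℝ))..b, ‖gd a x‖ = ∫ x in (b - (i : ℝ))..b, gd a x := by
      apply intervalIntegral.integral_congr
      intro x _
      exact Real.norm_of_nonneg (gd_nonneg ha x)
    rw [this, intervalIntegral_gd]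
    have := gH_nonneg a (b - (i : ℝ))
    linarith

lemma integral_gd_Iic {a : ℝ} (ha : 0 < a) (b : ℝ) :
    ∫ x in Iic b, gd a x = gH a b := by
  have := integral_Iic_of_hasDerivAt_of_tendsto' (f := gH a)
    (fun x _ => hasDerivAt_gH a x) (integrableOn_gd_Iic ha.le b) (tendsto_gH_atBot ha)
  simpa using this

lemma integrable_gd {a : ℝ} (ha : 0 < a) : Integrable (gd a) := by
  rw [← integrableOn_univ, ← Set.Iic_union_Ioi (a := (0:ℝ))]
  exact (integrableOn_gd_Iic ha.le 0).union
    (integrableOn_Ioi_deriv_of_nonneg' (fun x _ => hasDerivAt_gH a x)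
      (fun x _ => gd_nonneg ha.le x) (tendsto_gH_atTop a))

lemma integral_gd {a : ℝ} (ha : 0 < a) : ∫ x, gd a x = 1 := by
  have := integral_of_hasDerivAt_of_tendsto (fun x => hasDerivAt_gH a x)
    (integrable_gd ha) (tendsto_gH_atBot ha) (tendsto_gH_atTop a)
  simpa using this

noncomputable def gum (a : ℝ) : Measure ℝ :=
  volume.withDensity (fun x => ENNReal.ofReal (gd a x))

lemma gum_Iic {a : ℝ} (ha : 0 < a) (b : ℝ) :
    gum a (Iic b) = ENNReal.ofReal (gH a b) := by
  rw [gum, withDensity_apply _ measurableSet_Iic,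
    ← ofReal_integral_eq_lintegral_ofReal (integrableOn_gd_Iic ha.le b)
      (ae_of_all _ fun x => gd_nonneg ha.le x), integral_gd_Iic ha b]

lemma gum_singleton (a b : ℝ) : gum a {b} = 0 := by
  rw [gum, withDensity_apply _ (measurableSet_singleton b),
    Measure.restrict_eq_zero.mpr (by simp), lintegral_zero_measure]

lemma gum_Iio {a : ℝ} (ha : 0 < a) (b : ℝ) :
    gum a (Iio b) = ENNReal.ofReal (gH a b) := by
  have h : gum a (Iic b) = gum a (Iio b) + gum a {b} := by
    rw [← Set.Iio_union_right]
    exact measure_union (by simp) (measurableSet_singleton b)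
  rw [gum_Iic ha b, gum_singleton, add_zero] at h
  exact h.symm

end ConcreteAux

/-- **Proposition 1, part 1 (rounding property of the concrete random variable).**
Let `α ∈ (0,∞)^d` be a location parameter, `τ > 0` a temperature, and `G 1, …, G d`
i.i.d. standard Gumbel random variables (CDF `x ↦ exp (-exp (-x))`).  The concrete
random variable `X` has coordinates
`X k = exp ((log (α k) + G k)/τ) / ∑ i, exp ((log (α i) + G i)/τ)`.
Then for every `k`, the probability that `X k > X i` for all `i ≠ k` equals
`α k / ∑ i, α i`. -/
theorem concrete_rounding
    {Ω : Type*} [MeasureSpace Ω] [IsProbabilityMeasure (ℙ : Measure Ω)]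
    (d : ℕ) (hd : 1 ≤ d)
    (α : Fin d → ℝ) (hα : ∀ i, 0 < α i)
    (τ : ℝ) (hτ : 0 < τ)
    (G : Fin d → Ω → ℝ)
    (hGmeas : ∀ i, Measurable (G i))
    (hGindep : iIndepFun (m := fun _ => Real.measurableSpace) G ℙ)
    (hGcdf : ∀ i x, ℙ {ω | G i ω ≤ x} = ENNReal.ofReal (Real.exp (-Real.exp (-x))))
    (X : Fin d → Ω → ℝ)
    (hX : ∀ k ω, X k ω =
      Real.exp ((Real.log (α k) + G k ω) / τ) /
        ∑ i, Real.exp ((Real.log (α i) + G i ω) / τ))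
    (k : Fin d) :
    ℙ {ω | ∀ i, i ≠ k → X i ω < X k ω} = ENNReal.ofReal (α k / ∑ i, α i) := by
  classical
  set Y : Fin d → Ω → ℝ := fun i ω => Real.log (α i) + G i ω with hYdef
  have hYmeas : ∀ i, Measurable (Y i) := fun i => measurable_const.add (hGmeas i)
  have hYindep : iIndepFun (m := fun _ => Real.measurableSpace) Y ℙ :=
    hGindep.comp (fun i x => Real.log (α i) + x)
      (fun i => measurable_const.add measurable_id)
  -- law of each Y i
  have hmap : ∀ i, Measure.map (Y i) ℙ = ConcreteAux.gum (α i) := by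
    intro i
    have : IsProbabilityMeasure (Measure.map (Y i) ℙ) :=
      Measure.isProbabilityMeasure_map (hYmeas i).aemeasurable
    refine MeasureTheory.Measure.ext_of_Iic _ _ (fun t => ?_)
    rw [Measure.map_apply (hYmeas i) measurableSet_Iic, ConcreteAux.gum_Iic (hα i)]
    have hset : Y i ⁻¹' Set.Iic t = {ω | G i ω ≤ t - Real.log (α i)} := by
      ext ω
      simp only [Set.mem_preimage, Set.mem_Iic, hYdef, Set.mem_setOf_eq]
      constructor <;> intro h <;> linarith
    rw [hset, hGcdf]
    have hexp : Real.exp (-(t - Real.log (α i))) = α i * Real.exp (-t) := by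
      rw [neg_sub, sub_eq_add_neg, Real.exp_add, Real.exp_log (hα i)]
    rw [ConcreteAux.gH, hexp]
  have hYlt : ∀ i x, ℙ {ω | Y i ω < x} = ENNReal.ofReal (ConcreteAux.gH (α i) x) := by
    intro i x
    have : {ω | Y i ω < x} = Y i ⁻¹' Set.Iio x := rfl
    rw [this, ← Measure.map_apply (hYmeas i) measurableSet_Iio, hmap i,
      ConcreteAux.gum_Iio (hα i)]
  -- rewrite the event in terms of Y
  set T : Finset (Fin d) := Finset.univ.erase k with hT
  have hev : {ω | ∀ i, i ≠ k → X i ω < X k ω}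
      = {ω | ∀ i ∈ T, Y i ω < Y k ω} := by
    ext ω
    simp only [Set.mem_setOf_eq, hT, Finset.mem_erase, Finset.mem_univ, and_true]
    refine forall_congr' fun i => imp_congr Iff.rfl ?_
    rw [hX, hX]
    have hS : 0 < ∑ j, Real.exp ((Real.log (α j) + G j ω) / τ) :=
      Finset.sum_pos (fun j _ => Real.exp_pos _) ⟨k, Finset.mem_univ k⟩
    rw [div_lt_div_iff_of_pos_right hS, Real.exp_lt_exp,
      div_lt_div_iff_of_pos_right hτ]
  -- independence of Y k from the vector of the others
  set W : Ω → (T → ℝ) := fun ω i => Y i ω with hW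
  have hWmeas : Measurable W := measurable_pi_lambda _ (fun i => hYmeas i)
  have hindep : IndepFun (Y k) W ℙ := by
    have h := hYindep.indepFun_finset {k} T
      (by simp [hT, Finset.disjoint_left]) hYmeas
    have h2 := h.comp
      (φ := fun v : (({k} : Finset (Fin d)) : Type _) → ℝ =>
        v ⟨k, Finset.mem_singleton_self k⟩)
      (ψ := id) (measurable_pi_apply (X := fun _ => ℝ) _) measurable_id
    exact h2
  -- the event as a preimage under the pair map
  set U : Set (ℝ × (T → ℝ)) := {p | ∀ i : T, p.2 i < p.1} with hU
  have hUm : MeasurableSet U := by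
    have : U = ⋂ i : T, {p : ℝ × (T → ℝ) | p.2 i < p.1} := by
      ext p; simp [hU]
    rw [this]
    exact MeasurableSet.iInter fun i =>
      measurableSet_lt (measurable_snd.eval) measurable_fst
  have hpre : {ω | ∀ i ∈ T, Y i ω < Y k ω} = (fun ω => (Y k ω, W ω)) ⁻¹' U := by
    ext ω
    simp only [Set.mem_setOf_eq, Set.mem_preimage, hU, hW, Subtype.forall]
  haveI : IsProbabilityMeasure (Measure.map W ℙ) :=
    Measure.isProbabilityMeasure_map hWmeas.aemeasurable
  haveI : IsProbabilityMeasure (Measure.map (Y k) ℙ) :=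
    Measure.isProbabilityMeasure_map (hYmeas k).aemeasurable
  have hmapped : ℙ ((fun ω => (Y k ω, W ω)) ⁻¹' U)
      = ((Measure.map (Y k) ℙ).prod (Measure.map W ℙ)) U := by
    rw [← (indepFun_iff_map_prod_eq_prod_map_map (hYmeas k).aemeasurable
      hWmeas.aemeasurable).mp hindep,
      Measure.map_apply ((hYmeas k).prodMk hWmeas) hUm]
  -- slices
  set A : ℝ := ∑ i ∈ T, α i with hA
  have hAnn : 0 ≤ A := Finset.sum_nonneg fun i _ => (hα i).le
  have hslice : ∀ x : ℝ, (Measure.map W ℙ) (Prod.mk x ⁻¹' U)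
      = ENNReal.ofReal (ConcreteAux.gH A x) := by
    intro x
    have hsm : MeasurableSet (Prod.mk x ⁻¹' U) := measurable_prodMk_left hUm
    rw [Measure.map_apply hWmeas hsm]
    have hWpre : W ⁻¹' (Prod.mk x ⁻¹' U) = ⋂ i ∈ T, Y i ⁻¹' Set.Iio x := by
      ext ω
      simp [hU, hW, Subtype.forall]
    rw [hWpre, hYindep.meas_biInter (fun i _ => ⟨Set.Iio x, measurableSet_Iio, rfl⟩)]
    have : ∀ i ∈ T, ℙ (Y i ⁻¹' Set.Iio x) = ENNReal.ofReal (ConcreteAux.gH (α i) x) :=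
      fun i _ => hYlt i x
    rw [Finset.prod_congr rfl this,
      ← ENNReal.ofReal_prod_of_nonneg (fun i _ => ConcreteAux.gH_nonneg _ _)]
    congr 1
    unfold ConcreteAux.gH
    rw [← Real.exp_sum]
    congr 1
    rw [hA, Finset.sum_mul, ← Finset.sum_neg_distrib]
  -- put everything together
  rw [hev, hpre, hmapped, Measure.prod_apply hUm]
  have : ∀ᵐ x ∂(Measure.map (Y k) ℙ), (Measure.map W ℙ) (Prod.mk x ⁻¹' U)
      = ENNReal.ofReal (ConcreteAux.gH A x) := ae_of_all _ hslice
  rw [lintegral_congr_ae this, hmap k, ConcreteAux.gum,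
    lintegral_withDensity_eq_lintegral_mul _
      ((ConcreteAux.continuous_gd (α k)).measurable.ennreal_ofReal)
      ((ConcreteAux.continuous_gH A).measurable.ennreal_ofReal)]
  set s : ℝ := A + α k with hs
  have hspos : 0 < s := by
    have := hα k
    simp only [hs]
    linarith
  have hsum : s = ∑ i, α i := by
    rw [hs, hA, hT, Finset.sum_erase_add]
    exact Finset.mem_univ k
  have hfun : ∀ x : ℝ, ConcreteAux.gd (α k) x * ConcreteAux.gH A x
      = (α k / s) * ConcreteAux.gd s x := by
    intro x
    unfold ConcreteAux.gd ConcreteAux.gH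
    have h1 : Real.exp (-(α k * Real.exp (-x))) * Real.exp (-(A * Real.exp (-x)))
        = Real.exp (-(s * Real.exp (-x))) := by
      rw [← Real.exp_add]; congr 1; rw [hs]; ring
    calc α k * Real.exp (-x) * Real.exp (-(α k * Real.exp (-x))) * Real.exp (-(A * Real.exp (-x)))
        = α k * Real.exp (-x)
          * (Real.exp (-(α k * Real.exp (-x))) * Real.exp (-(A * Real.exp (-x)))) := by ring
      _ = α k * Real.exp (-x) * Real.exp (-(s * Real.exp (-x))) := by rw [h1]
      _ = α k / s * (s * Real.exp (-x) * Real.exp (-(s * Real.exp (-x)))) := by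
          field_simp
  have hint : Integrable (fun x => (α k / s) * ConcreteAux.gd s x) :=
    (ConcreteAux.integrable_gd hspos).const_mul _
  calc ∫⁻ x, (fun x => ENNReal.ofReal (ConcreteAux.gd (α k) x)) x
        * (fun x => ENNReal.ofReal (ConcreteAux.gH A x)) x
      = ∫⁻ x, ENNReal.ofReal ((α k / s) * ConcreteAux.gd s x) := by
        refine lintegral_congr fun x => ?_
        simp only
        rw [← ENNReal.ofReal_mul (ConcreteAux.gd_nonneg (hα k).le x), hfun x]
    _ = ENNReal.ofReal (∫ x, (α k / s) * ConcreteAux.gd s x) := by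
        rw [ofReal_integral_eq_lintegral_ofReal hint (ae_of_all _ fun x =>
          mul_nonneg (div_nonneg (hα k).le hspos.le) (ConcreteAux.gd_nonneg hspos.le x))]
    _ = ENNReal.ofReal (α k / ∑ i, α i) := by
        rw [integral_const_mul, ConcreteAux.integral_gd hspos, mul_one, hsum]
end

section
/- Let d ≥ 1, let α ∈ (0,∞)^d be a location parameter, and let G_1,…,G_d be i.i.d. real random variables with the standard Gumbel distribution. For each temperature τ > 0 define X_k(τ) = exp((log α_k + G_k)/τ) / Σ_{i=1}^d exp((log α_i + G_i)/τ). Then for every k ∈ {1,…,d}, the probability of the event that lim_{τ→0⁺} X_k(τ) = 1 equals α_k / Σ_{i=1}^d α_i. (Proposition 1, part 2: zero-temperature property.) -/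
open MeasureTheory ProbabilityTheory Real Filter Topology Set

section Aux
namespace GumbelAux

noncomputable def gf (c : ℝ) (t : ℝ) : ℝ := Real.exp (-t - c * Real.exp (-t))

noncomputable def gF (c : ℝ) (t : ℝ) : ℝ := c⁻¹ * Real.exp (-c * Real.exp (-t))

lemma gf_pos (c t : ℝ) : 0 < gf c t := Real.exp_pos _

lemma continuous_gf (c : ℝ) : Continuous (gf c) := by
  unfold gf; fun_prop

lemma hasDerivAt_gF {c : ℝ} (hc : c ≠ 0) (t : ℝ) : HasDerivAt (gF c) (gf c t) t := by
  have h0 : HasDerivAt (fun t : ℝ => Real.exp (-t)) (Real.exp (-t) * (-1)) t :=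
    (hasDerivAt_neg t).exp
  have h1 := (h0.const_mul (-c)).exp
  have h2 := h1.const_mul c⁻¹
  refine HasDerivAt.congr_deriv (f := gF c) h2 ?_
  unfold gf
  rw [show -t - c * Real.exp (-t) = -t + -c * Real.exp (-t) by ring, Real.exp_add]
  field_simp

lemma tendsto_gF_atBot {c : ℝ} (hc : 0 < c) : Tendsto (gF c) atBot (𝓝 0) := by
  have h2 : Tendsto (fun t : ℝ => Real.exp (-t)) atBot atTop :=
    Real.tendsto_exp_atTop.comp tendsto_neg_atBot_atTop
  have h3 : Tendsto (fun t : ℝ => -c * Real.exp (-t)) atBot atBot :=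
    (tendsto_const_mul_atBot_of_neg (neg_neg_iff_pos.2 hc)).2 h2
  have h4 : Tendsto (fun t : ℝ => Real.exp (-c * Real.exp (-t))) atBot (𝓝 0) :=
    Real.tendsto_exp_atBot.comp h3
  have h5 := h4.const_mul c⁻¹
  unfold gF
  simpa [neg_mul] using h5

lemma gf_le_left {c : ℝ} (hc : 0 < c) (t : ℝ) : gf c t ≤ 4 / c ^ 2 * Real.exp t := by
  have hE : Real.exp (-t) = (Real.exp t)⁻¹ := Real.exp_neg t
  set y := c * Real.exp (-t) with hy
  have hy0 : 0 < y := by positivity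
  have h1 : y / 2 + 1 ≤ Real.exp (y / 2) := Real.add_one_le_exp _
  have h2 : Real.exp y = Real.exp (y / 2) * Real.exp (y / 2) := by
    rw [← Real.exp_add]; ring_nf
  have hsq : y ^ 2 / 4 ≤ Real.exp y := by nlinarith [Real.exp_pos (y / 2)]
  have hexp : Real.exp (-y) ≤ 4 / y ^ 2 := by
    rw [Real.exp_neg]
    have h4 : (0:ℝ) < y ^ 2 / 4 := by positivity
    calc (Real.exp y)⁻¹ ≤ (y ^ 2 / 4)⁻¹ := by gcongr
      _ = 4 / y ^ 2 := by field_simp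
  have key : gf c t = Real.exp (-t) * Real.exp (-y) := by
    unfold gf
    rw [hy, ← Real.exp_add, sub_eq_add_neg]
  have h3 : gf c t ≤ Real.exp (-t) * (4 / y ^ 2) := by
    rw [key]; exact mul_le_mul_of_nonneg_left hexp (Real.exp_pos _).le
  have h5 : Real.exp t ≠ 0 := Real.exp_ne_zero t
  have h4 : Real.exp (-t) * (4 / y ^ 2) = 4 / c ^ 2 * Real.exp t := by
    rw [hy, hE]
    field_simp
  linarith

lemma gf_le_exp_neg {c : ℝ} (hc : 0 ≤ c) (t : ℝ) : gf c t ≤ Real.exp (-t) := by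
  unfold gf
  apply Real.exp_le_exp.2
  nlinarith [Real.exp_pos (-t)]

lemma integrable_gf {c : ℝ} (hc : 0 < c) : Integrable (gf c) := by
  rw [← integrableOn_univ, ← Set.Iic_union_Ioi (a := (0:ℝ))]
  refine IntegrableOn.union ?_ ?_
  · refine Integrable.mono' ((integrableOn_exp_Iic 0).const_mul (4 / c ^ 2))
      ((continuous_gf c).aestronglyMeasurable.restrict) ?_
    exact ae_of_all _ fun t => by
      rw [Real.norm_of_nonneg (gf_pos c t).le]; exact gf_le_left hc t
  · refine Integrable.mono' (exp_neg_integrableOn_Ioi 0 one_pos)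
      ((continuous_gf c).aestronglyMeasurable.restrict) ?_
    exact ae_of_all _ fun t => by
      rw [Real.norm_of_nonneg (gf_pos c t).le]; simpa using gf_le_exp_neg hc.le t

lemma integral_Iic_gf {c : ℝ} (hc : 0 < c) (x : ℝ) :
    ∫ t in Iic x, gf c t = c⁻¹ * Real.exp (-c * Real.exp (-x)) := by
  have h := integral_Iic_of_hasDerivAt_of_tendsto' (f := gF c) (f' := gf c) (a := x)
    (fun t _ => hasDerivAt_gF hc.ne' t) (integrable_gf hc).integrableOn (tendsto_gF_atBot hc)
  simpa [gF] using h

noncomputable def gν (c : ℝ) : Measure ℝ :=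
  volume.withDensity fun t => ENNReal.ofReal (gf c t)

lemma gν_Iic {c : ℝ} (hc : 0 < c) (x : ℝ) :
    gν c (Iic x) = ENNReal.ofReal (c⁻¹ * Real.exp (-c * Real.exp (-x))) := by
  rw [gν, withDensity_apply _ measurableSet_Iic, ← integral_Iic_gf hc x,
    ofReal_integral_eq_lintegral_ofReal (integrable_gf hc).integrableOn
      (ae_of_all _ fun t => (gf_pos c t).le)]

lemma gν_singleton (c : ℝ) (x : ℝ) : gν c {x} = 0 := by
  rw [gν, withDensity_apply _ (measurableSet_singleton x)]
  exact setLIntegral_measure_zero _ _ (Real.volume_singleton)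

lemma gν_Iio {c : ℝ} (hc : 0 < c) (x : ℝ) :
    gν c (Iio x) = ENNReal.ofReal (c⁻¹ * Real.exp (-c * Real.exp (-x))) := by
  rw [← Iic_diff_right, measure_diff_null (gν_singleton c x), gν_Iic hc]

lemma gν_univ {c : ℝ} (hc : 0 < c) : gν c univ = ENNReal.ofReal c⁻¹ := by
  have hU : ⋃ n : ℕ, Iic ((n : ℝ)) = univ := by
    ext t
    simp only [mem_iUnion, mem_Iic, mem_univ, iff_true]
    exact exists_nat_ge t
  have hmono : Monotone fun n : ℕ => Iic ((n : ℝ)) := fun m n h =>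
    Iic_subset_Iic.2 (by exact_mod_cast h)
  have h1 := tendsto_measure_iUnion_atTop (μ := gν c) hmono
  rw [hU] at h1
  have h2 : Tendsto (fun n : ℕ => gν c (Iic (n : ℝ))) atTop (𝓝 (ENNReal.ofReal c⁻¹)) := by
    simp_rw [gν_Iic hc]
    have hr : Tendsto (fun n : ℕ => c⁻¹ * Real.exp (-c * Real.exp (-(n : ℝ)))) atTop
        (𝓝 (c⁻¹ * 1)) := by
      have he : Tendsto (fun n : ℕ => Real.exp (-(n : ℝ))) atTop (𝓝 0) :=
        Real.tendsto_exp_atBot.comp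
          (tendsto_neg_atTop_atBot.comp tendsto_natCast_atTop_atTop)
      have h6 : Tendsto (fun n : ℕ => -c * Real.exp (-(n : ℝ))) atTop (𝓝 (-c * 0)) :=
        he.const_mul (-c)
      rw [mul_zero] at h6
      have h7 : Tendsto (fun n : ℕ => Real.exp (-c * Real.exp (-(n : ℝ)))) atTop
          (𝓝 (Real.exp 0)) := (Real.continuous_exp.tendsto 0).comp h6
      rw [Real.exp_zero] at h7
      exact h7.const_mul c⁻¹
    rw [mul_one] at hr
    exact (ENNReal.continuous_ofReal.tendsto _).comp hr
  exact tendsto_nhds_unique h1 h2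

lemma lintegral_gf {c : ℝ} (hc : 0 < c) :
    ∫⁻ t, ENNReal.ofReal (gf c t) = ENNReal.ofReal c⁻¹ := by
  have h := gν_univ hc
  rwa [gν, withDensity_apply _ MeasurableSet.univ, Measure.restrict_univ] at h

end GumbelAux

end Aux

/-- **Proposition 1, part 2 (zero-temperature property of the concrete random variable).**
Let `α ∈ (0,∞)^d` and let `G 1, …, G d` be i.i.d. standard Gumbel random variables
(CDF `x ↦ exp (-exp (-x))`).  For each temperature `τ > 0` put
`X k τ = exp ((log (α k) + G k)/τ) / ∑ i, exp ((log (α i) + G i)/τ)`.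
Then for every `k`, the probability of the event that `X k τ → 1` as `τ → 0⁺`
(pointwise, with the Gumbel samples fixed) equals `α k / ∑ i, α i`. -/
theorem concrete_zero_temperature
    {Ω : Type*} [MeasureSpace Ω] [IsProbabilityMeasure (ℙ : Measure Ω)]
    (d : ℕ) (hd : 1 ≤ d)
    (α : Fin d → ℝ) (hα : ∀ i, 0 < α i)
    (G : Fin d → Ω → ℝ)
    (hGmeas : ∀ i, Measurable (G i))
    (hGindep : iIndepFun G ℙ)
    (hGcdf : ∀ i x, ℙ {ω | G i ω ≤ x} = ENNReal.ofReal (Real.exp (-Real.exp (-x))))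
    (X : Fin d → ℝ → Ω → ℝ)
    (hX : ∀ k τ ω, X k τ ω =
      Real.exp ((Real.log (α k) + G k ω) / τ) /
        ∑ i, Real.exp ((Real.log (α i) + G i ω) / τ))
    (k : Fin d) :
    ℙ {ω | Tendsto (fun τ => X k τ ω) (𝓝[>] 0) (𝓝 1)} =
      ENNReal.ofReal (α k / ∑ i, α i) := by
  classical
  -- Step 1: the event is exactly "k is the strict argmax".
  have hset : {ω | Tendsto (fun τ => X k τ ω) (𝓝[>] 0) (𝓝 1)}
      = {ω : Ω | ∀ i, i ≠ k → Real.log (α i) + G i ω < Real.log (α k) + G k ω} := by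
    ext ω
    simp only [Set.mem_setOf_eq]
    constructor
    · intro h i hik
      by_contra hcon
      push_neg at hcon
      have hb : ∀ τ : ℝ, 0 < τ → X k τ ω ≤ 1 / 2 := by
        intro τ hτ
        rw [hX]
        set e : Fin d → ℝ := fun j => Real.exp ((Real.log (α j) + G j ω) / τ) with he
        have hpos : ∀ j, 0 < e j := fun j => Real.exp_pos _
        have hks : e k + e i ≤ ∑ j, e j := by
          have hsub : ({k, i} : Finset (Fin d)) ⊆ Finset.univ := Finset.subset_univ _
          have h2 := Finset.sum_le_sum_of_subset_of_nonneg hsub (fun j _ _ => (hpos j).le)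
          rwa [Finset.sum_pair (Ne.symm hik)] at h2
        have hki : e k ≤ e i := by
          apply Real.exp_le_exp.2
          gcongr
        have hD : 0 < ∑ j, e j := Finset.sum_pos' (fun j _ => (hpos j).le)
          ⟨k, Finset.mem_univ k, hpos k⟩
        have hfrac : e k / (∑ j, e j) ≤ e k / (2 * e k) := by
          apply div_le_div_of_nonneg_left (hpos k).le (by positivity)
          linarith
        have heq2 : e k / (2 * e k) = 1 / 2 := by
          rw [mul_comm, div_mul_eq_div_div, div_self (hpos k).ne']
        calc e k / (∑ j, e j) ≤ e k / (2 * e k) := hfrac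
          _ = 1 / 2 := heq2
      have h12 : ∀ᶠ τ in 𝓝[>] (0:ℝ), 1 / 2 < X k τ ω :=
        h.eventually (eventually_gt_nhds (by norm_num))
      have hmem : ∀ᶠ τ in 𝓝[>] (0:ℝ), τ ∈ Ioi (0:ℝ) := eventually_mem_nhdsWithin
      obtain ⟨τ, h1, h2⟩ := (h12.and hmem).exists
      exact absurd (hb τ h2) (not_le.2 h1)
    · intro h
      have key : Tendsto (fun τ : ℝ =>
          ∑ i, Real.exp (((Real.log (α i) + G i ω) - (Real.log (α k) + G k ω)) / τ))
          (𝓝[>] 0) (𝓝 1) := by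
        have h1 : (1:ℝ) = ∑ i : Fin d, if i = k then 1 else 0 := by simp
        rw [h1]
        apply tendsto_finset_sum
        intro i _
        by_cases hik : i = k
        · subst hik
          simp only [sub_self, zero_div, Real.exp_zero, if_pos rfl]
          exact tendsto_const_nhds
        · simp only [if_neg hik]
          have hneg : (Real.log (α i) + G i ω) - (Real.log (α k) + G k ω) < 0 :=
            sub_neg.2 (h i hik)
          have h2 : Tendsto (fun τ : ℝ => τ⁻¹) (𝓝[>] 0) atTop := tendsto_inv_nhdsGT_zero
          have h3 : Tendsto (fun τ : ℝ =>
              ((Real.log (α i) + G i ω) - (Real.log (α k) + G k ω)) * τ⁻¹) (𝓝[>] 0) atBot :=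
            (tendsto_const_mul_atBot_of_neg hneg).2 h2
          have h4 := Real.tendsto_exp_atBot.comp h3
          refine h4.congr fun τ => ?_
          simp only [Function.comp_apply, div_eq_mul_inv]
      have hXeq : ∀ τ ∈ Ioi (0:ℝ), X k τ ω
          = (∑ i, Real.exp (((Real.log (α i) + G i ω) - (Real.log (α k) + G k ω)) / τ))⁻¹ := by
        intro τ hτ
        rw [hX]
        have hsum : ∑ i, Real.exp (((Real.log (α i) + G i ω) - (Real.log (α k) + G k ω)) / τ)
            = (∑ i, Real.exp ((Real.log (α i) + G i ω) / τ))
              / Real.exp ((Real.log (α k) + G k ω) / τ) := by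
          rw [Finset.sum_div]
          refine Finset.sum_congr rfl fun i _ => ?_
          rw [sub_div, Real.exp_sub]
        rw [hsum, inv_div]
      have h4 := key.inv₀ one_ne_zero
      rw [inv_one] at h4
      refine Tendsto.congr' ?_ h4
      filter_upwards [self_mem_nhdsWithin] with τ hτ using (hXeq τ hτ).symm
  rw [hset]
  -- Step 2: compute the probability.
  set Y : Ω → ({x // x ∈ Finset.univ.erase k} → ℝ) := fun ω j => G (↑j) ω with hYdef
  have hYmeas : Measurable Y := measurable_pi_lambda _ fun j => hGmeas _
  set C : Set (ℝ × ({x // x ∈ Finset.univ.erase k} → ℝ)) :=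
    {p | ∀ j, p.2 j < p.1 + (Real.log (α k) - Real.log (α (↑j)))} with hCdef
  have hset2 : {ω : Ω | ∀ i, i ≠ k → Real.log (α i) + G i ω < Real.log (α k) + G k ω}
      = (fun ω => (G k ω, Y ω)) ⁻¹' C := by
    ext ω
    simp only [Set.mem_setOf_eq, Set.mem_preimage, hCdef, hYdef]
    constructor
    · intro h j
      have hjk : (↑j : Fin d) ≠ k := (Finset.mem_erase.1 j.2).1
      have := h (↑j) hjk
      linarith
    · intro h i hik
      have hi : i ∈ Finset.univ.erase k := Finset.mem_erase.2 ⟨hik, Finset.mem_univ i⟩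
      have := h ⟨i, hi⟩
      simp only at this
      linarith
  rw [hset2]
  have hC : MeasurableSet C := by
    rw [hCdef, Set.setOf_forall]
    exact MeasurableSet.iInter fun j => measurableSet_lt
      (measurable_snd.eval) (measurable_fst.add_const _)
  -- independence of G k and the rest
  have hdisj : Disjoint ({k} : Finset (Fin d)) (Finset.univ.erase k) :=
    Finset.disjoint_singleton_left.2 fun h => (Finset.mem_erase.1 h).1 rfl
  have hind0 := hGindep.indepFun_finset {k} (Finset.univ.erase k) hdisj hGmeas
  have hindep : IndepFun (G k) Y ℙ := by
    have h := hind0.comp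
      (φ := fun v : ({k} : Finset (Fin d)) → ℝ => v ⟨k, Finset.mem_singleton_self k⟩)
      (ψ := id) (_mγ := Real.measurableSpace) (measurable_pi_apply _) measurable_id
    exact h
  have hmapprod : Measure.map (fun ω => (G k ω, Y ω)) ℙ
      = (Measure.map (G k) ℙ).prod (Measure.map Y ℙ) :=
    (indepFun_iff_map_prod_eq_prod_map_map (hGmeas k).aemeasurable hYmeas.aemeasurable).1 hindep
  -- law of each G i
  have hlaw : ∀ i, Measure.map (G i) ℙ = GumbelAux.gν 1 := by
    intro i
    have hpm : IsProbabilityMeasure (Measure.map (G i) ℙ) :=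
      Measure.isProbabilityMeasure_map (hGmeas i).aemeasurable
    refine Measure.ext_of_Iic _ _ fun x => ?_
    rw [Measure.map_apply (hGmeas i) measurableSet_Iic, GumbelAux.gν_Iic one_pos]
    have hpre : G i ⁻¹' Iic x = {ω | G i ω ≤ x} := rfl
    rw [hpre, hGcdf i x]
    norm_num
  have hIio : ∀ i x, ℙ (G i ⁻¹' Iio x) = ENNReal.ofReal (Real.exp (-Real.exp (-x))) := by
    intro i x
    rw [← Measure.map_apply (hGmeas i) measurableSet_Iio, hlaw i, GumbelAux.gν_Iio one_pos]
    norm_num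
  have hYpm : IsProbabilityMeasure (Measure.map Y ℙ) :=
    Measure.isProbabilityMeasure_map hYmeas.aemeasurable
  -- the ratio R
  set R : ℝ := (∑ i ∈ Finset.univ.erase k, α i) / α k with hRdef
  have hR0 : 0 ≤ R := by
    apply div_nonneg _ (hα k).le
    exact Finset.sum_nonneg fun i _ => (hα i).le
  have hmeasC' : ∀ z : ℝ, MeasurableSet
      {y : {x // x ∈ Finset.univ.erase k} → ℝ |
        ∀ j, y j < z + (Real.log (α k) - Real.log (α (↑j)))} := by
    intro z
    rw [Set.setOf_forall]
    exact MeasurableSet.iInter fun j => measurableSet_lt (measurable_pi_apply j) measurable_const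
  have hinner : ∀ z : ℝ, (Measure.map Y ℙ) (Prod.mk z ⁻¹' C)
      = ENNReal.ofReal (Real.exp (-(R * Real.exp (-z)))) := by
    intro z
    have hpre2 : Prod.mk z ⁻¹' C =
        {y : {x // x ∈ Finset.univ.erase k} → ℝ |
          ∀ j, y j < z + (Real.log (α k) - Real.log (α (↑j)))} := rfl
    rw [hpre2, Measure.map_apply hYmeas (hmeasC' z)]
    have hYpre : Y ⁻¹' {y : {x // x ∈ Finset.univ.erase k} → ℝ |
          ∀ j, y j < z + (Real.log (α k) - Real.log (α (↑j)))}
        = ⋂ i ∈ Finset.univ.erase k, G i ⁻¹' Iio (z + (Real.log (α k) - Real.log (α i))) := by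
      ext ω
      simp only [Set.mem_preimage, Set.mem_setOf_eq, Set.mem_iInter, hYdef, Set.mem_Iio]
      constructor
      · intro hh i hi
        exact hh ⟨i, hi⟩
      · intro hh j
        exact hh (↑j) j.2
    rw [hYpre]
    have hprod := hGindep.meas_biInter (S := Finset.univ.erase k)
      (s := fun i => G i ⁻¹' Iio (z + (Real.log (α k) - Real.log (α i))))
      (fun i _ => ⟨Iio (z + (Real.log (α k) - Real.log (α i))), measurableSet_Iio, rfl⟩)
    rw [hprod]
    have hterm : ∀ i : Fin d, Real.exp (-(z + (Real.log (α k) - Real.log (α i))))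
        = α i / α k * Real.exp (-z) := by
      intro i
      rw [show -(z + (Real.log (α k) - Real.log (α i)))
          = (Real.log (α i) - Real.log (α k)) + (-z) by ring,
        Real.exp_add, Real.exp_sub, Real.exp_log (hα i), Real.exp_log (hα k)]
    have hsum : ∑ i ∈ Finset.univ.erase k,
        -Real.exp (-(z + (Real.log (α k) - Real.log (α i)))) = -(R * Real.exp (-z)) := by
      have h5 : ∑ i ∈ Finset.univ.erase k,
          -Real.exp (-(z + (Real.log (α k) - Real.log (α i))))
          = -∑ i ∈ Finset.univ.erase k, α i / α k * Real.exp (-z) := by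
        rw [← Finset.sum_neg_distrib]
        exact Finset.sum_congr rfl fun i _ => by rw [hterm i]
      rw [h5, ← Finset.sum_mul, ← Finset.sum_div, hRdef]
    calc ∏ i ∈ Finset.univ.erase k, ℙ (G i ⁻¹' Iio (z + (Real.log (α k) - Real.log (α i))))
        = ∏ i ∈ Finset.univ.erase k,
          ENNReal.ofReal (Real.exp (-Real.exp (-(z + (Real.log (α k) - Real.log (α i)))))) :=
          Finset.prod_congr rfl fun i _ => hIio i _
      _ = ENNReal.ofReal (∏ i ∈ Finset.univ.erase k,
          Real.exp (-Real.exp (-(z + (Real.log (α k) - Real.log (α i)))))) :=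
          (ENNReal.ofReal_prod_of_nonneg fun i _ => (Real.exp_pos _).le).symm
      _ = ENNReal.ofReal (Real.exp (∑ i ∈ Finset.univ.erase k,
          -Real.exp (-(z + (Real.log (α k) - Real.log (α i)))))) := by rw [Real.exp_sum]
      _ = ENNReal.ofReal (Real.exp (-(R * Real.exp (-z)))) := by rw [hsum]
  -- put it together
  have hmain : ℙ ((fun ω => (G k ω, Y ω)) ⁻¹' C)
      = ∫⁻ z, ENNReal.ofReal (Real.exp (-(R * Real.exp (-z)))) ∂(GumbelAux.gν 1) := by
    rw [← Measure.map_apply ((hGmeas k).prodMk hYmeas) hC, hmapprod,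
      Measure.prod_apply hC, hlaw k]
    exact lintegral_congr fun z => hinner z
  rw [hmain]
  -- evaluate the integral
  have hg : Measurable fun z : ℝ => ENNReal.ofReal (Real.exp (-(R * Real.exp (-z)))) := by
    apply ENNReal.measurable_ofReal.comp
    fun_prop
  have hf : Measurable fun t : ℝ => ENNReal.ofReal (GumbelAux.gf 1 t) :=
    (ENNReal.continuous_ofReal.comp (GumbelAux.continuous_gf 1)).measurable
  rw [GumbelAux.gν, lintegral_withDensity_eq_lintegral_mul _ hf hg]
  have hcomb : ∀ z : ℝ,
      ((fun t => ENNReal.ofReal (GumbelAux.gf 1 t)) *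
        fun z => ENNReal.ofReal (Real.exp (-(R * Real.exp (-z))))) z
      = ENNReal.ofReal (GumbelAux.gf (1 + R) z) := by
    intro z
    simp only [Pi.mul_apply]
    rw [← ENNReal.ofReal_mul (GumbelAux.gf_pos 1 z).le]
    congr 1
    unfold GumbelAux.gf
    rw [← Real.exp_add]
    congr 1
    ring
  rw [lintegral_congr hcomb, GumbelAux.lintegral_gf (by linarith : (0:ℝ) < 1 + R)]
  congr 1
  have hSsum : α k + ∑ i ∈ Finset.univ.erase k, α i = ∑ i, α i :=
    Finset.add_sum_erase _ _ (Finset.mem_univ k)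
  have h1R : 1 + R = (α k + ∑ i ∈ Finset.univ.erase k, α i) / α k := by
    rw [hRdef, add_div, div_self (hα k).ne']
  rw [h1R, inv_div, hSsum]
end

section
/- Let d ≥ 1, let α ∈ (0,∞)^d, let G_1,…,G_d be i.i.d. real random variables with the standard Gumbel distribution, and for each τ > 0 let X(τ) be the concrete random variable with coordinates X_k(τ) = exp((log α_k + G_k)/τ) / Σ_{i=1}^d exp((log α_i + G_i)/τ). Let f : ℝ^d → ℝ be continuous. Then almost surely the index K maximizing log α_i + G_i is unique, and lim_{τ→0⁺} f(X(τ)) = f(e_K), where e_K is the one-hot vector at index K; in particular f(X(τ)) converges almost surely (hence in probability) as τ → 0⁺ to f applied to the rounding of X. (Convergence of the Gumbel-Softmax reparameterized objective to the empirical estimator as the temperature tends to zero.) -/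
open MeasureTheory ProbabilityTheory Real Filter Topology


open MeasureTheory ProbabilityTheory Real Filter Topology

-- deterministic softmax limit
lemma gs_softmax_tendsto {d : ℕ} (Y : Fin d → ℝ) (K : Fin d)
    (hK : ∀ i, i ≠ K → Y i < Y K) :
    Tendsto (fun τ : ℝ => fun k => Real.exp (Y k / τ) / ∑ i, Real.exp (Y i / τ))
      (𝓝[>] 0) (𝓝 (fun i : Fin d => if i = K then 1 else 0)) := by
  set Z : Fin d → ℝ := fun i => Y i - Y K with hZ
  have hrw : ∀ τ : ℝ, (fun k => Real.exp (Y k / τ) / ∑ i, Real.exp (Y i / τ))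
      = fun k => Real.exp (Z k / τ) / ∑ i, Real.exp (Z i / τ) := by
    intro τ
    funext k
    have h1 : ∀ i, Real.exp (Y i / τ) = Real.exp (Z i / τ) * Real.exp (Y K / τ) := by
      intro i
      rw [← Real.exp_add, ← add_div, hZ]
      simp
    rw [h1 k, Finset.sum_congr rfl (fun i _ => h1 i), ← Finset.sum_mul,
      mul_div_mul_right _ _ (Real.exp_ne_zero _)]
  have hcoord : ∀ k, Tendsto (fun τ : ℝ => Real.exp (Z k / τ)) (𝓝[>] 0)
      (𝓝 (if k = K then 1 else 0)) := by
    intro k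
    by_cases hk : k = K
    · subst hk
      simp only [if_pos rfl, hZ, sub_self, zero_div, Real.exp_zero]
      exact tendsto_const_nhds
    · rw [if_neg hk]
      have hneg : Z k < 0 := sub_neg.mpr (hK k hk)
      have h1 : Tendsto (fun τ : ℝ => Z k / τ) (𝓝[>] 0) atBot := by
        have := (tendsto_const_mul_atBot_of_neg hneg).mpr
          (tendsto_inv_nhdsGT_zero (𝕜 := ℝ))
        simpa [div_eq_mul_inv] using this
      exact Real.tendsto_exp_atBot.comp h1
  have hden : Tendsto (fun τ : ℝ => ∑ i, Real.exp (Z i / τ)) (𝓝[>] 0) (𝓝 1) := by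
    have := tendsto_finset_sum Finset.univ (fun i _ => hcoord i)
    simpa using this
  rw [tendsto_pi_nhds]
  intro k
  have := (hcoord k).div hden one_ne_zero
  simp only [div_one] at this
  refine Tendsto.congr (fun τ => ?_) this
  have := congrFun (hrw τ) k
  simpa using this.symm

open MeasureTheory ProbabilityTheory Real Filter Topology

lemma gs_atom_zero {Ω : Type*} [MeasureSpace Ω] [IsProbabilityMeasure (ℙ : Measure Ω)]
    (g : Ω → ℝ) (hg : Measurable g)
    (hcdf : ∀ x, ℙ {ω | g ω ≤ x} = ENNReal.ofReal (Real.exp (-Real.exp (-x))))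
    (a : ℝ) : ℙ {ω | g ω = a} = 0 := by
  set F : ℝ → ℝ := fun x => Real.exp (-Real.exp (-x)) with hF
  have hFcont : Continuous F := by continuity
  have hFmono : Monotone F := by
    intro x y hxy
    exact Real.exp_le_exp.mpr (neg_le_neg (Real.exp_le_exp.mpr (neg_le_neg hxy)))
  have key : ∀ ε : ℝ, 0 < ε → ℙ {ω | g ω = a} ≤ ENNReal.ofReal (F a - F (a - ε)) := by
    intro ε hε
    have hsub : {ω | g ω = a} ⊆ {ω | g ω ≤ a} \ {ω | g ω ≤ a - ε} := by
      intro ω hω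
      simp only [Set.mem_setOf_eq] at hω
      constructor
      · exact le_of_eq hω
      · simp only [Set.mem_setOf_eq, hω]; linarith
    refine (measure_mono hsub).trans ?_
    have hsub2 : {ω | g ω ≤ a - ε} ⊆ {ω | g ω ≤ a} := fun ω hω => by
      simp only [Set.mem_setOf_eq] at *; linarith
    have hmeas : NullMeasurableSet {ω | g ω ≤ a - ε} (ℙ : Measure Ω) :=
      (hg measurableSet_Iic).nullMeasurableSet
    rw [measure_diff hsub2 hmeas (measure_ne_top _ _),
      hcdf, hcdf, ← ENNReal.ofReal_sub _ (Real.exp_nonneg _)]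
  have hlim : Tendsto (fun ε : ℝ => ENNReal.ofReal (F a - F (a - ε))) (𝓝[>] 0) (𝓝 0) := by
    have h1 : Tendsto (fun ε : ℝ => F a - F (a - ε)) (𝓝 0) (𝓝 0) := by
      have : Tendsto (fun ε : ℝ => F (a - ε)) (𝓝 0) (𝓝 (F a)) := by
        have := hFcont.continuousAt (x := a)
        exact this.tendsto.comp (by
          have : Tendsto (fun ε : ℝ => a - ε) (𝓝 0) (𝓝 (a - 0)) :=
            (tendsto_const_nhds.sub tendsto_id)
          simpa using this)
      have h2 := (tendsto_const_nhds (x := F a) (f := 𝓝 (0:ℝ))).sub this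
      simpa using h2
    have h2 : Tendsto (fun ε : ℝ => F a - F (a - ε)) (𝓝[>] 0) (𝓝 0) :=
      h1.mono_left nhdsWithin_le_nhds
    have := (ENNReal.continuous_ofReal.tendsto 0).comp h2
    simpa [Function.comp_def] using this
  have : ℙ {ω | g ω = a} ≤ 0 := by
    refine ge_of_tendsto hlim ?_
    filter_upwards [self_mem_nhdsWithin] with ε hε
    exact key ε hε
  exact le_antisymm this (by positivity)

lemma gs_eq_null {Ω : Type*} [MeasureSpace Ω] [IsProbabilityMeasure (ℙ : Measure Ω)]
    (g h : Ω → ℝ) (hg : Measurable g) (hh : Measurable h)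
    (hindep : IndepFun g h ℙ)
    (hatom : ∀ a, ℙ {ω | h ω = a} = 0)
    (c : ℝ) : ℙ {ω | g ω = h ω + c} = 0 := by
  have hmap : Measure.map (fun ω => (g ω, h ω)) ℙ = (Measure.map g ℙ).prod (Measure.map h ℙ) :=
    (indepFun_iff_map_prod_eq_prod_map_map hg.aemeasurable hh.aemeasurable).mp hindep
  have hS : MeasurableSet {p : ℝ × ℝ | p.1 = p.2 + c} :=
    measurableSet_eq_fun measurable_fst (measurable_snd.add_const c)
  have : ℙ {ω | g ω = h ω + c}
      = (Measure.map (fun ω => (g ω, h ω)) ℙ) {p : ℝ × ℝ | p.1 = p.2 + c} := by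
    rw [Measure.map_apply (hg.prodMk hh) hS]
    rfl
  rw [this, hmap, Measure.prod_apply hS]
  have : ∀ x : ℝ, (Measure.map h ℙ) (Prod.mk x ⁻¹' {p : ℝ × ℝ | p.1 = p.2 + c}) = 0 := by
    intro x
    have hpre : (Prod.mk x ⁻¹' {p : ℝ × ℝ | p.1 = p.2 + c}) = {(x - c)} := by
      ext y
      simp only [Set.mem_preimage, Set.mem_setOf_eq, Set.mem_singleton_iff]
      constructor <;> intro h1 <;> linarith
    rw [hpre, Measure.map_apply hh (measurableSet_singleton _)]
    have : h ⁻¹' {x - c} = {ω | h ω = x - c} := by ext ω; simp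
    rw [this]
    exact hatom (x - c)
  simp only [this]
  simp

/-- **Almost sure convergence of the Gumbel-Softmax reparameterized objective as
the temperature tends to zero.**
Let `α ∈ (0,∞)^d`, let `G 1, …, G d` be i.i.d. standard Gumbel random variables
(CDF `x ↦ exp (-exp (-x))`), and for each `τ > 0` let `X τ` be the concrete
random vector with coordinates
`X τ k = exp ((log (α k) + G k)/τ) / ∑ i, exp ((log (α i) + G i)/τ)`.
Let `f : ℝ^d → ℝ` be continuous.  Then almost surely there is a (necessarily
unique) index `K` strictly maximizing `log (α i) + G i`, and
`f (X τ) → f (e K)` as `τ → 0⁺`, where `e K` is the one-hot vector at `K`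
(i.e. the rounding of `X`). -/
theorem gumbel_softmax_objective_zero_temperature
    {Ω : Type*} [MeasureSpace Ω] [IsProbabilityMeasure (ℙ : Measure Ω)]
    (d : ℕ) (hd : 1 ≤ d)
    (α : Fin d → ℝ) (hα : ∀ i, 0 < α i)
    (G : Fin d → Ω → ℝ)
    (hGmeas : ∀ i, Measurable (G i))
    (hGindep : iIndepFun (m := fun _ => Real.measurableSpace) G ℙ)
    (hGcdf : ∀ i x, ℙ {ω | G i ω ≤ x} = ENNReal.ofReal (Real.exp (-Real.exp (-x))))
    (X : ℝ → Ω → Fin d → ℝ)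
    (hX : ∀ τ ω k, X τ ω k =
      Real.exp ((Real.log (α k) + G k ω) / τ) /
        ∑ i, Real.exp ((Real.log (α i) + G i ω) / τ))
    (f : (Fin d → ℝ) → ℝ) (hf : Continuous f) :
    ℙ {ω | ∃! K : Fin d,
        (∀ i, i ≠ K → Real.log (α i) + G i ω < Real.log (α K) + G K ω) ∧
        Tendsto (fun τ => f (X τ ω)) (𝓝[>] 0)
          (𝓝 (f (fun i => if i = K then 1 else 0)))} = 1 := by
  classical
  set Y : Fin d → Ω → ℝ := fun i ω => Real.log (α i) + G i ω with hY
  -- pairwise difference events are null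
  have hnull : ∀ i j : Fin d, i ≠ j → ℙ {ω | Y i ω = Y j ω} = 0 := by
    intro i j hij
    have hindep : IndepFun (G i) (G j) ℙ := hGindep.indepFun hij
    have hatom := gs_atom_zero (G j) (hGmeas j) (hGcdf j)
    have h0 := gs_eq_null (G i) (G j) (hGmeas i) (hGmeas j) hindep hatom
      (Real.log (α j) - Real.log (α i))
    have hset : {ω | Y i ω = Y j ω}
        = {ω | G i ω = G j ω + (Real.log (α j) - Real.log (α i))} := by
      ext ω
      simp only [Set.mem_setOf_eq, hY]
      constructor <;> intro h1 <;> linarith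
    rw [hset]
    exact h0
  -- the bad set
  set B : Set Ω := ⋃ p : Fin d × Fin d, {ω | p.1 ≠ p.2 ∧ Y p.1 ω = Y p.2 ω} with hB
  have hBmeas : MeasurableSet B := by
    refine MeasurableSet.iUnion (fun p => ?_)
    by_cases hp : p.1 = p.2
    · have : {ω | p.1 ≠ p.2 ∧ Y p.1 ω = Y p.2 ω} = ∅ := by
        ext ω; simp [hp]
      rw [this]; exact MeasurableSet.empty
    · have : {ω | p.1 ≠ p.2 ∧ Y p.1 ω = Y p.2 ω} = {ω | Y p.1 ω = Y p.2 ω} := by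
        ext ω; simp [hp]
      rw [this]
      exact measurableSet_eq_fun ((measurable_const).add (hGmeas p.1))
        ((measurable_const).add (hGmeas p.2))
  have hBnull : ℙ B = 0 := by
    refine measure_iUnion_null (fun p => ?_)
    by_cases hp : p.1 = p.2
    · have : {ω | p.1 ≠ p.2 ∧ Y p.1 ω = Y p.2 ω} = ∅ := by
        ext ω; simp [hp]
      rw [this]; simp
    · refine measure_mono_null (fun ω hω => hω.2) (hnull p.1 p.2 hp)
  have hA1 : ℙ Bᶜ = 1 := (prob_compl_eq_one_iff hBmeas).mpr hBnull
  -- Bᶜ is contained in the event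
  have hsub : Bᶜ ⊆ {ω | ∃! K : Fin d,
      (∀ i, i ≠ K → Real.log (α i) + G i ω < Real.log (α K) + G K ω) ∧
      Tendsto (fun τ => f (X τ ω)) (𝓝[>] 0)
        (𝓝 (f (fun i => if i = K then 1 else 0)))} := by
    intro ω hω
    have hdist : ∀ i j : Fin d, i ≠ j → Y i ω ≠ Y j ω := by
      intro i j hij
      have := Set.notMem_of_mem_compl hω
      rw [hB] at this
      simp only [Set.mem_iUnion, Set.mem_setOf_eq, not_exists] at this
      intro heq
      exact this (i, j) ⟨hij, heq⟩
    have : Nonempty (Fin d) := ⟨⟨0, hd⟩⟩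
    obtain ⟨K, hKmax⟩ := Finite.exists_max (fun i => Y i ω)
    have hstrict : ∀ i, i ≠ K → Y i ω < Y K ω := fun i hi =>
      lt_of_le_of_ne (hKmax i) (hdist i K hi)
    have htendX : Tendsto (fun τ => X τ ω) (𝓝[>] 0)
        (𝓝 (fun i : Fin d => if i = K then 1 else 0)) := by
      refine (gs_softmax_tendsto (fun i => Y i ω) K hstrict).congr (fun τ => ?_)
      funext k
      exact (hX τ ω k).symm
    have htend : Tendsto (fun τ => f (X τ ω)) (𝓝[>] 0)
        (𝓝 (f (fun i : Fin d => if i = K then 1 else 0))) :=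
      (hf.tendsto _).comp htendX
    refine ⟨K, ⟨hstrict, htend⟩, ?_⟩
    intro K' hK'
    by_contra hne
    have h1 : Y K ω < Y K' ω := hK'.1 K (Ne.symm hne)
    have h2 : Y K' ω < Y K ω := hstrict K' hne
    linarith
  refine le_antisymm prob_le_one ?_
  calc (1 : ENNReal) = ℙ Bᶜ := hA1.symm
    _ ≤ _ := measure_mono hsub
end
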